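/- arXiv:2004.07587 — 2 statements merged into one kernel-verified Lean document; each statement's English description precedes it below -/
import Mathlib

section
/- Let p be a prime and 0 ≤ n ≤ p-1. Then the n-th symmetric power Sym^n F̄_p^2 of the standard representation of GL_2(F_p) is an irreducible F̄_p-representation of GL_2(F_p). -/
open MvPolynomial

/-- The algebraic closure of `𝔽_p`. -/
abbrev F (p : ℕ) [Fact p.Prime] : Type := AlgebraicClosure (ZMod p)

/-- The group `GL₂(𝔽_p)`. -/
abbrev GL2 (p : ℕ) := GL (Fin 2) (ZMod p)

variable (p : ℕ) [Fact p.Prime]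

/-- The algebra endomorphism of `F̄_p[X₀,X₁]` induced by `g ∈ GL₂(𝔽_p)` acting on the
variables via the standard representation. -/
noncomputable def matAct (g : GL2 p) :
    MvPolynomial (Fin 2) (F p) →ₐ[F p] MvPolynomial (Fin 2) (F p) :=
  aeval fun i => ∑ j, algebraMap (ZMod p) (F p) (g.val j i) • X j

theorem matAct_one : matAct p 1 = AlgHom.id (F p) _ := by
  apply MvPolynomial.algHom_ext
  intro i
  simp [matAct, Matrix.one_apply]

theorem matAct_mul (g h : GL2 p) : matAct p (g * h) = (matAct p g).comp (matAct p h) := by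
  apply MvPolynomial.algHom_ext
  intro i
  simp only [matAct, AlgHom.comp_apply, aeval_X, map_sum, map_smul,
    Matrix.GeneralLinearGroup.coe_mul, Matrix.mul_apply]
  simp [Finset.smul_sum, smul_smul, map_sum, map_mul,
    Finset.sum_comm (s := (Finset.univ : Finset (Fin 2))), mul_comm,
    add_smul, Finset.sum_add_distrib, add_comm]
  simp only [← map_mul, algebraMap_smul]
  abel

/-- The action of `GL₂(𝔽_p)` on polynomials in two variables. -/
noncomputable def polyRep : Representation (F p) (GL2 p) (MvPolynomial (Fin 2) (F p)) where
  toFun g := (matAct p g).toLinearMap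
  map_one' := by
    apply LinearMap.ext; intro x
    change matAct p 1 x = x
    rw [matAct_one]; rfl
  map_mul' g h := by
    apply LinearMap.ext; intro x
    simp [matAct_mul]

/-- The space of homogeneous polynomials of degree `n` in two variables: the underlying
space of `Sym^n F̄_p²`. -/
noncomputable abbrev SymSpace (n : ℕ) : Submodule (F p) (MvPolynomial (Fin 2) (F p)) :=
  homogeneousSubmodule (Fin 2) (F p) n

theorem symSpace_invariant (g : GL2 p) (n : ℕ) :
    ∀ x ∈ SymSpace p n, polyRep p g x ∈ SymSpace p n := by
  intro x hx
  rw [mem_homogeneousSubmodule] at hx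
  have h1 : ∀ i, (∑ j, algebraMap (ZMod p) (F p) (g.val j i) •
      (X j : MvPolynomial (Fin 2) (F p))).IsHomogeneous 1 := by
    intro i
    apply IsHomogeneous.sum
    intro j _
    rw [MvPolynomial.smul_eq_C_mul]
    exact (isHomogeneous_X _ _).C_mul _
  have h2 := hx.aeval (fun i => ∑ j, algebraMap (ZMod p) (F p) (g.val j i) • X j)
    (fun i => h1 i)
  rw [one_mul] at h2
  exact (mem_homogeneousSubmodule _ _).mpr h2

/-- `Sym^n F̄_p²`, the `n`-th symmetric power of the standard representation of `GL₂(𝔽_p)`,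
realised on homogeneous polynomials of degree `n`. -/
noncomputable def symRep (n : ℕ) : Representation (F p) (GL2 p) (SymSpace p n) where
  toFun g := (polyRep p g).restrict (symSpace_invariant p g n)
  map_one' := by
    apply LinearMap.ext; intro x; apply Subtype.ext
    simp [LinearMap.restrict_apply]
  map_mul' g h := by
    apply LinearMap.ext; intro x; apply Subtype.ext
    simp [LinearMap.restrict_apply, map_mul (polyRep p) g h]

/-- The determinant of `g ∈ GL₂(𝔽_p)` as a unit of `F̄_p`. -/
noncomputable def detUnit : GL2 p →* (F p)ˣ :=
  (Units.map (algebraMap (ZMod p) (F p)).toMonoidHom).comp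
    (Matrix.GeneralLinearGroup.det)

set_option synthInstance.maxHeartbeats 1000000 in
/-- `det^a ⊗ Sym^n F̄_p²` for an integer power `a` of the determinant character. -/
noncomputable def VRepZ (a : ℤ) (n : ℕ) : Representation (F p) (GL2 p) (SymSpace p n) where
  toFun g := ((detUnit p g ^ a : (F p)ˣ) : F p) • symRep p n g
  map_one' := by
    show ((detUnit p 1 ^ a : (F p)ˣ) : F p) • symRep p n 1 = 1
    rw [map_one, one_zpow, Units.val_one, one_smul, map_one]
  map_mul' g h := by
    show ((detUnit p (g * h) ^ a : (F p)ˣ) : F p) • symRep p n (g * h) =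
      (((detUnit p g ^ a : (F p)ˣ) : F p) • symRep p n g) *
        (((detUnit p h ^ a : (F p)ˣ) : F p) • symRep p n h)
    rw [map_mul, map_mul, mul_zpow, Units.val_mul, smul_mul_smul_comm]

/-- `V_{a,b} = det^a ⊗ Sym^{b-1} F̄_p²` is `VRep p a (b-1)`. -/
noncomputable def VRep (a n : ℕ) : Representation (F p) (GL2 p) (SymSpace p n) :=
  VRepZ p (a : ℤ) n

noncomputable instance (n : ℕ) : FiniteDimensional (F p) (SymSpace p n) := by
  have h : SymSpace p n ≤ restrictTotalDegree (Fin 2) (F p) n := by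
    intro x hx
    rw [mem_restrictTotalDegree]
    exact IsHomogeneous.totalDegree_le ((mem_homogeneousSubmodule _ _).mp hx)
  exact Submodule.finiteDimensional_of_le h

/-- `ρV` is a Jordan–Hölder constituent (a subquotient) of `ρW`. -/
def IsConstituent {V W : Type} [AddCommGroup V] [Module (F p) V] [AddCommGroup W]
    [Module (F p) W] (ρV : Representation (F p) (GL2 p) V)
    (ρW : Representation (F p) (GL2 p) W) : Prop :=
  ∃ A B : Submodule (MonoidAlgebra (F p) (GL2 p)) (Representation.asModule ρW),
    A ≤ B ∧ Nonempty ((↥B ⧸ Submodule.comap B.subtype A) ≃ₗ[MonoidAlgebra (F p) (GL2 p)]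
      Representation.asModule ρV)

/-- The subgroup of relations `[B] - [A] - [C]` coming from short exact sequences
`0 → A → B → C → 0` of finite-dimensional representations. -/
noncomputable def grothRel : AddSubgroup (FreeAbelianGroup (FDRep (F p) (GL2 p))) :=
  AddSubgroup.closure { x | ∃ (A B C : FDRep (F p) (GL2 p))
      (S : Submodule (MonoidAlgebra (F p) (GL2 p)) (Representation.asModule B.ρ)),
      Nonempty (Representation.asModule A.ρ ≃ₗ[MonoidAlgebra (F p) (GL2 p)] S) ∧
      Nonempty (Representation.asModule C.ρ ≃ₗ[MonoidAlgebra (F p) (GL2 p)]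
        (Representation.asModule B.ρ ⧸ S)) ∧
      x = FreeAbelianGroup.of B - FreeAbelianGroup.of A - FreeAbelianGroup.of C }

/-- The Grothendieck group `G₀(F̄_p[GL₂(𝔽_p)])` of finite-dimensional representations. -/
abbrev Groth := FreeAbelianGroup (FDRep (F p) (GL2 p)) ⧸ grothRel p

/-- The class of a finite-dimensional representation in the Grothendieck group. -/
noncomputable def cls (W : FDRep (F p) (GL2 p)) : Groth p :=
  QuotientAddGroup.mk (FreeAbelianGroup.of W)

/-- The class `[det^a ⊗ Sym^m]` in the Grothendieck group, for `m : ℤ`, with the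
conventions `[Sym^{-1}] = 0` and `[Sym^k] = -[det^{k+1} ⊗ Sym^{-k-2}]` for `k < -1`,
twisted by `det^a`. -/
noncomputable def dCls (a m : ℤ) : Groth p :=
  if 0 ≤ m then cls p (FDRep.of (VRepZ p a m.toNat))
  else if m = -1 then 0
  else - cls p (FDRep.of (VRepZ p (a + m + 1) (-m - 2).toNat))

/-- The explicit formula for the minimal weight `k_min(V_{a,b})`. -/
def kf (p a b : ℕ) : ℕ := if a + b < p then a*(p+1)+b+1 else (a+1)*(p+1)+b*p-p^2

namespace SymAux

variable (p : ℕ) [Fact p.Prime]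

open Finsupp

/-- Upper unipotent `[[1, t], [0, 1]]` as an element of `GL₂(𝔽_p)`. -/
def uMat (t : ZMod p) : GL2 p :=
  ⟨!![1, t; 0, 1], !![1, -t; 0, 1],
    by rw [Matrix.mul_fin_two]; simp [Matrix.one_fin_two],
    by rw [Matrix.mul_fin_two]; simp [Matrix.one_fin_two]⟩

/-- Lower unipotent `[[1, 0], [t, 1]]` as an element of `GL₂(𝔽_p)`. -/
def lMat (t : ZMod p) : GL2 p :=
  ⟨!![1, 0; t, 1], !![1, 0; -t, 1],
    by rw [Matrix.mul_fin_two]; simp [Matrix.one_fin_two],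
    by rw [Matrix.mul_fin_two]; simp [Matrix.one_fin_two]⟩

theorem matAct_uMat_X0 (t : ZMod p) : matAct p (uMat p t) (X 0) = X 0 := by
  simp [matAct, uMat, Fin.sum_univ_two]

theorem matAct_uMat_X1 (t : ZMod p) :
    matAct p (uMat p t) (X 1) = algebraMap (ZMod p) (F p) t • X 0 + X 1 := by
  simp [matAct, uMat, Fin.sum_univ_two]

theorem matAct_lMat_X0 (t : ZMod p) :
    matAct p (lMat p t) (X 0) = X 0 + algebraMap (ZMod p) (F p) t • X 1 := by
  simp [matAct, lMat, Fin.sum_univ_two]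

theorem matAct_lMat_X1 (t : ZMod p) : matAct p (lMat p t) (X 1) = X 1 := by
  simp [matAct, lMat, Fin.sum_univ_two]

theorem sum_pow_zmod (i : ℕ) :
    ∑ x : ZMod p, x ^ i = if i ≠ 0 ∧ (p - 1) ∣ i then -1 else 0 := by
  classical
  rcases Nat.eq_zero_or_pos i with rfl | hi
  · simp only [pow_zero, Finset.sum_const, Finset.card_univ, ZMod.card, nsmul_eq_mul, mul_one,
      ZMod.natCast_self, ne_eq, not_true_eq_false, false_and, if_false]
  · let φ : (ZMod p)ˣ ↪ ZMod p := ⟨fun x => (x : ZMod p), fun _ _ h => Units.ext h⟩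
    have hmap : Finset.univ.map φ = Finset.univ \ {(0 : ZMod p)} := by
      ext x
      simp only [Finset.mem_map, Finset.mem_univ, true_and, Finset.mem_sdiff,
        Finset.mem_singleton, φ, Function.Embedding.coeFn_mk, true_and]
      constructor
      · rintro ⟨u, rfl⟩; exact Units.ne_zero u
      · intro hx; exact ⟨Units.mk0 x hx, rfl⟩
    have h0 : ∑ x : ZMod p, x ^ i = ∑ x ∈ Finset.univ \ {(0 : ZMod p)}, x ^ i := by
      rw [← Finset.sum_sdiff (Finset.subset_univ {0}), Finset.sum_singleton,
        zero_pow (by omega), add_zero]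
    have h1 : ∑ x ∈ Finset.univ \ {(0 : ZMod p)}, x ^ i = ∑ u : (ZMod p)ˣ, (u : ZMod p) ^ i := by
      rw [← hmap, Finset.sum_map]
      rfl
    rw [h0, h1, FiniteField.sum_pow_units, ZMod.card]
    simp [hi.ne']

theorem expand_u (t : ZMod p) (i j : ℕ) :
    matAct p (uMat p t) (X 0 ^ i * X 1 ^ j) =
      ∑ m ∈ Finset.range (j + 1),
        ((j.choose m : F p) * (algebraMap (ZMod p) (F p) t) ^ m) •
          (X 0 ^ (i + m) * X 1 ^ (j - m)) := by
  rw [map_mul, map_pow, map_pow, matAct_uMat_X0, matAct_uMat_X1, add_pow, Finset.mul_sum]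
  refine Finset.sum_congr rfl fun m hm => ?_
  rw [smul_pow, MvPolynomial.smul_eq_C_mul, MvPolynomial.smul_eq_C_mul, map_mul, map_pow, MvPolynomial.C_eq_coe_nat]
  ring

theorem expand_l (t : ZMod p) (n : ℕ) :
    matAct p (lMat p t) (X 0 ^ n) =
      ∑ m ∈ Finset.range (n + 1),
        ((n.choose m : F p) * (algebraMap (ZMod p) (F p) t) ^ (n - m)) •
          (X 0 ^ m * X 1 ^ (n - m)) := by
  rw [map_pow, matAct_lMat_X0, add_pow]
  refine Finset.sum_congr rfl fun m hm => ?_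
  rw [smul_pow, MvPolynomial.smul_eq_C_mul, MvPolynomial.smul_eq_C_mul, map_mul, map_pow, MvPolynomial.C_eq_coe_nat]
  ring

theorem sumU (i j : ℕ) (hj : j ≤ p - 1) :
    ∑ t : ZMod p, algebraMap (ZMod p) (F p) (t ^ (p - 2)) •
        matAct p (uMat p t) (X 0 ^ i * X 1 ^ j) =
      (-(j : F p)) • (X 0 ^ (i + 1) * X 1 ^ (j - 1)) := by
  have hp2 : 2 ≤ p := (Fact.out : p.Prime).two_le
  have key : ∀ m ∈ Finset.range (j + 1),
      (∑ t : ZMod p, (t : ZMod p) ^ (p - 2 + m)) = if m = 1 then -1 else 0 := by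
    intro m hm
    rw [Finset.mem_range] at hm
    rw [sum_pow_zmod]
    by_cases h1 : m = 1
    · subst h1
      rw [if_pos ⟨by omega, ⟨1, by omega⟩⟩, if_pos rfl]
    · rw [if_neg, if_neg h1]
      rintro ⟨hne, c, hc⟩
      match c with
      | 0 => simp at hc; omega
      | 1 => omega
      | (c + 2) =>
        have h2 : (p - 1) * 2 ≤ (p - 1) * (c + 2) := Nat.mul_le_mul_left _ (by omega)
        omega
  have step1 : ∑ t : ZMod p, algebraMap (ZMod p) (F p) (t ^ (p - 2)) •
        matAct p (uMat p t) (X 0 ^ i * X 1 ^ j)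
      = ∑ m ∈ Finset.range (j + 1), ((j.choose m : F p) *
          algebraMap (ZMod p) (F p) (∑ t : ZMod p, t ^ (p - 2 + m))) •
            (X 0 ^ (i + m) * X 1 ^ (j - m)) := by
    simp only [expand_u, Finset.smul_sum]
    rw [Finset.sum_comm]
    refine Finset.sum_congr rfl fun m hm => ?_
    rw [map_sum, Finset.mul_sum, Finset.sum_smul]
    refine Finset.sum_congr rfl fun t _ => ?_
    rw [smul_smul]
    congr 1
    simp only [pow_add, map_mul, map_pow]
    ring
  rw [step1, Finset.sum_congr rfl fun m hm => by rw [key m hm]]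
  rcases Nat.eq_zero_or_pos j with rfl | hjpos
  · simp
  · rw [Finset.sum_eq_single_of_mem 1 (by rw [Finset.mem_range]; omega)
      (fun m _ hne => by simp [hne])]
    rw [if_pos rfl, map_neg, map_one, mul_neg_one, Nat.choose_one_right]

theorem sumL (n k : ℕ) (hk1 : 1 ≤ k) (hkn : k ≤ n) (hn : n ≤ p - 1) :
    ∑ t : ZMod p, algebraMap (ZMod p) (F p) (t ^ (p - 1 - k)) •
        matAct p (lMat p t) (X 0 ^ n) =
      (-(n.choose k : F p)) • (X 0 ^ (n - k) * X 1 ^ k) := by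
  have hp2 : 2 ≤ p := (Fact.out : p.Prime).two_le
  have key : ∀ m ∈ Finset.range (n + 1),
      (∑ t : ZMod p, (t : ZMod p) ^ (p - 1 - k + (n - m))) =
        if m = n - k then -1 else 0 := by
    intro m hm
    rw [Finset.mem_range] at hm
    rw [sum_pow_zmod]
    by_cases h1 : m = n - k
    · subst h1
      rw [if_pos ⟨by omega, ⟨1, by omega⟩⟩, if_pos rfl]
    · rw [if_neg, if_neg h1]
      rintro ⟨hne, c, hc⟩
      match c with
      | 0 => simp at hc; omega
      | 1 => omega
      | (c + 2) =>
        have h2 : (p - 1) * 2 ≤ (p - 1) * (c + 2) := Nat.mul_le_mul_left _ (by omega)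
        omega
  have step1 : ∑ t : ZMod p, algebraMap (ZMod p) (F p) (t ^ (p - 1 - k)) •
        matAct p (lMat p t) (X 0 ^ n)
      = ∑ m ∈ Finset.range (n + 1), ((n.choose m : F p) *
          algebraMap (ZMod p) (F p) (∑ t : ZMod p, t ^ (p - 1 - k + (n - m)))) •
            (X 0 ^ m * X 1 ^ (n - m)) := by
    simp only [expand_l, Finset.smul_sum]
    rw [Finset.sum_comm]
    refine Finset.sum_congr rfl fun m hm => ?_
    rw [map_sum, Finset.mul_sum, Finset.sum_smul]
    refine Finset.sum_congr rfl fun t _ => ?_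
    rw [smul_smul]
    congr 1
    simp only [pow_add, map_mul, map_pow]
    ring
  rw [step1, Finset.sum_congr rfl fun m hm => by rw [key m hm]]
  rw [Finset.sum_eq_single_of_mem (n - k) (by rw [Finset.mem_range]; omega)
    (fun m _ hne => by simp [hne])]
  have hnk : n - (n - k) = k := by omega
  rw [if_pos rfl, map_neg, map_one, mul_neg_one, hnk, Nat.choose_symm hkn]

theorem charP_F : CharP (F p) p :=
  charP_of_injective_algebraMap (algebraMap (ZMod p) (F p)).injective p

theorem natCast_F_ne (m : ℕ) (h0 : m ≠ 0) (hm : m < p) : (m : F p) ≠ 0 := by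
  haveI := charP_F p
  rw [Ne, CharP.cast_eq_zero_iff (F p) p]
  intro hdvd
  have := Nat.le_of_dvd (Nat.pos_of_ne_zero h0) hdvd
  omega

theorem choose_F_ne (m n : ℕ) (hm : m ≤ n) (hnp : n < p) : ((n.choose m : F p)) ≠ 0 := by
  haveI := charP_F p
  rw [Ne, CharP.cast_eq_zero_iff (F p) p]
  intro hdvd
  have h1 : (n.choose m) ∣ n.factorial :=
    ⟨m.factorial * (n - m).factorial, by
      rw [← Nat.choose_mul_factorial_mul_factorial hm]; ring⟩
  have h2 : p ∣ n.factorial := hdvd.trans h1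
  have h3 := (Nat.Prime.dvd_factorial (Fact.out : p.Prime)).mp h2
  omega

theorem coeff_mu (i j : ℕ) (e : Fin 2 →₀ ℕ) :
    MvPolynomial.coeff e (X 0 ^ i * X 1 ^ j : MvPolynomial (Fin 2) (F p)) =
      if Finsupp.single 0 i + Finsupp.single 1 j = e then 1 else 0 := by
  rw [X_pow_eq_monomial, X_pow_eq_monomial, monomial_mul, one_mul, coeff_monomial]

theorem mono_eq (d : Fin 2 →₀ ℕ) (a : F p) :
    monomial d a = a • (X 0 ^ (d 0) * X 1 ^ (d 1) : MvPolynomial (Fin 2) (F p)) := by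
  have hd : d = Finsupp.single 0 (d 0) + Finsupp.single 1 (d 1) := by
    ext i
    fin_cases i <;> simp [Finsupp.single_apply]
  rw [X_pow_eq_monomial, X_pow_eq_monomial, monomial_mul, one_mul, smul_monomial,
    smul_eq_mul, mul_one, ← hd]

theorem mu_mem (n i j : ℕ) (h : i + j = n) :
    (X 0 ^ i * X 1 ^ j : MvPolynomial (Fin 2) (F p)) ∈ SymSpace p n := by
  rw [mem_homogeneousSubmodule]
  subst h
  exact (isHomogeneous_X_pow (0 : Fin 2) i).mul (isHomogeneous_X_pow (1 : Fin 2) j)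

theorem mu_ne (i j : ℕ) : (X 0 ^ i * X 1 ^ j : MvPolynomial (Fin 2) (F p)) ≠ 0 := by
  rw [X_pow_eq_monomial, X_pow_eq_monomial, monomial_mul, one_mul, Ne, monomial_eq_zero]
  exact one_ne_zero

theorem pair_app0 (a b : ℕ) :
    (Finsupp.single (0 : Fin 2) a + Finsupp.single (1 : Fin 2) b) (0 : Fin 2) = a := by
  simp [Finsupp.single_apply]

theorem pair_app1 (a b : ℕ) :
    (Finsupp.single (0 : Fin 2) a + Finsupp.single (1 : Fin 2) b) (1 : Fin 2) = b := by
  simp [Finsupp.single_apply]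

theorem supp_deg {n : ℕ} {f : MvPolynomial (Fin 2) (F p)} (hf : f ∈ SymSpace p n)
    {d : Fin 2 →₀ ℕ} (hd : d ∈ f.support) : d 0 + d 1 = n := by
  have h := (mem_homogeneousSubmodule n f).mp hf
  by_contra hne
  refine (MvPolynomial.mem_support_iff.mp hd) (h.coeff_eq_zero ?_)
  rwa [Finsupp.degree_apply, Finset.sum_subset (Finset.subset_univ _)
    (fun i _ hi => Finsupp.notMem_support_iff.mp hi), Fin.sum_univ_two]

end SymAux

open SymAux in
set_option maxHeartbeats 1000000 in
set_option synthInstance.maxHeartbeats 400000 in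
/-- for `0 ≤ n ≤ p-1`, the representation `Sym^n F̄_p²` of `GL₂(𝔽_p)`
is irreducible. -/
theorem sym_irreducible (p : ℕ) [Fact p.Prime] (n : ℕ) (hn : n ≤ p - 1) :
    IsSimpleModule (MonoidAlgebra (F p) (GL2 p)) (Representation.asModule (symRep p n)) := by
  classical
  have hp2 : 2 ≤ p := (Fact.out : p.Prime).two_le
  set ρ := symRep p n with hρ
  -- Nontriviality
  have hnt : Nontrivial ρ.asModule := by
    have h1 : ((⟨X 0 ^ n * X 1 ^ 0, mu_mem p n n 0 (by omega)⟩ : SymSpace p n)) ≠ 0 := by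
      intro h
      exact mu_ne p n 0 (congrArg Subtype.val h)
    exact ⟨ρ.asModuleEquiv.symm ⟨X 0 ^ n * X 1 ^ 0, mu_mem p n n 0 (by omega)⟩,
      ρ.asModuleEquiv.symm 0, fun h => h1 (ρ.asModuleEquiv.symm.injective h)⟩
  have hbt : (⊥ : Submodule (MonoidAlgebra (F p) (GL2 p)) ρ.asModule) ≠ ⊤ := by
    intro h
    obtain ⟨a, b, hab⟩ := hnt
    apply hab
    have ha : a ∈ (⊥ : Submodule (MonoidAlgebra (F p) (GL2 p)) ρ.asModule) :=
      h ▸ Submodule.mem_top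
    have hb : b ∈ (⊥ : Submodule (MonoidAlgebra (F p) (GL2 p)) ρ.asModule) :=
      h ▸ Submodule.mem_top
    rw [Submodule.mem_bot] at ha hb
    rw [ha, hb]
  refine { toNontrivial := ⟨⊥, ⊤, hbt⟩, eq_bot_or_eq_top := fun N => ?_ }
  by_cases hNbot : N = ⊥
  · exact Or.inl hNbot
  refine Or.inr ?_
  -- The invariance predicate
  let P : MvPolynomial (Fin 2) (F p) → Prop :=
    fun f => ∃ hf : f ∈ SymSpace p n, ρ.asModuleEquiv.symm ⟨f, hf⟩ ∈ N
  have P0 : P 0 := by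
    refine ⟨Submodule.zero_mem _, ?_⟩
    rw [show (⟨(0 : MvPolynomial (Fin 2) (F p)), Submodule.zero_mem _⟩ : SymSpace p n) = 0
      from rfl, map_zero]
    exact N.zero_mem
  have Padd : ∀ f g, P f → P g → P (f + g) := by
    rintro f g ⟨hf, hfN⟩ ⟨hg, hgN⟩
    refine ⟨add_mem hf hg, ?_⟩
    rw [show (⟨f + g, add_mem hf hg⟩ : SymSpace p n) = ⟨f, hf⟩ + ⟨g, hg⟩ from rfl, map_add]
    exact N.add_mem hfN hgN
  have Psmul : ∀ (c : F p) f, P f → P (c • f) := by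
    rintro c f ⟨hf, hfN⟩
    refine ⟨Submodule.smul_mem _ c hf, ?_⟩
    rw [show (⟨c • f, Submodule.smul_mem _ c hf⟩ : SymSpace p n) = c • (⟨f, hf⟩ : SymSpace p n)
      from rfl, Representation.asModuleEquiv_symm_map_smul]
    exact N.smul_mem _ hfN
  have Pact : ∀ (g : GL2 p) f, P f → P (matAct p g f) := by
    rintro g f ⟨hf, hfN⟩
    refine ⟨symSpace_invariant p g n f hf, ?_⟩
    rw [show (⟨matAct p g f, symSpace_invariant p g n f hf⟩ : SymSpace p n) =
      ρ g (⟨f, hf⟩ : SymSpace p n) from rfl, Representation.asModuleEquiv_symm_map_rho]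
    exact N.smul_mem _ hfN
  have Pscale : ∀ (c : F p) f, c ≠ 0 → P (c • f) → P f := by
    intro c f hc hP
    have h := Psmul c⁻¹ _ hP
    rwa [inv_smul_smul₀ hc] at h
  have Pop : ∀ (u : ZMod p → MvPolynomial (Fin 2) (F p)),
      (∀ t, P (u t)) → P (∑ t : ZMod p, u t) :=
    fun u hu => Finset.sum_induction u P Padd P0 (fun t _ => hu t)
  -- Expansion of the averaged raising operator
  have expand : ∀ f : MvPolynomial (Fin 2) (F p), (∀ d ∈ f.support, d 0 + d 1 = n) →
      (∑ t : ZMod p, algebraMap (ZMod p) (F p) (t ^ (p - 2)) • matAct p (uMat p t) f)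
        = ∑ d ∈ f.support, (MvPolynomial.coeff d f * -(d 1 : F p)) •
            (X 0 ^ (d 0 + 1) * X 1 ^ (d 1 - 1)) := by
    intro f hdeg
    calc
      ∑ t : ZMod p, algebraMap (ZMod p) (F p) (t ^ (p - 2)) • matAct p (uMat p t) f
        = ∑ t : ZMod p, ∑ d ∈ f.support, algebraMap (ZMod p) (F p) (t ^ (p - 2)) •
            (MvPolynomial.coeff d f • matAct p (uMat p t) (X 0 ^ (d 0) * X 1 ^ (d 1))) := by
          refine Finset.sum_congr rfl fun t _ => ?_
          conv_lhs => rw [← f.support_sum_monomial_coeff]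
          rw [map_sum, Finset.smul_sum]
          refine Finset.sum_congr rfl fun d _ => ?_
          rw [mono_eq, map_smul]
      _ = ∑ d ∈ f.support, MvPolynomial.coeff d f •
            ∑ t : ZMod p, algebraMap (ZMod p) (F p) (t ^ (p - 2)) •
              matAct p (uMat p t) (X 0 ^ (d 0) * X 1 ^ (d 1)) := by
          rw [Finset.sum_comm]
          refine Finset.sum_congr rfl fun d _ => ?_
          rw [Finset.smul_sum]
          exact Finset.sum_congr rfl fun t _ => smul_comm _ _ _
      _ = ∑ d ∈ f.support, (MvPolynomial.coeff d f * -(d 1 : F p)) •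
            (X 0 ^ (d 0 + 1) * X 1 ^ (d 1 - 1)) := by
          refine Finset.sum_congr rfl fun d hd => ?_
          rw [sumU p (d 0) (d 1) (by have := hdeg d hd; omega), smul_smul]
  -- Climbing to X0^n
  have climb : ∀ m : ℕ, ∀ f : MvPolynomial (Fin 2) (F p), P f → f ≠ 0 →
      (∀ d ∈ f.support, d 1 ≤ m) → P ((X 0 : MvPolynomial (Fin 2) (F p)) ^ n * X 1 ^ 0) := by
    intro m
    induction m with
    | zero =>
      intro f hPf hf0 hsupp
      have hfmem : f ∈ SymSpace p n := hPf.choose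
      have hsub : f.support ⊆ {Finsupp.single 0 n} := by
        intro d hd
        rw [Finset.mem_singleton]
        have h1 : d 1 = 0 := Nat.le_zero.mp (hsupp d hd)
        have h2 := supp_deg p hfmem hd
        ext i
        fin_cases i <;> simp [Finsupp.single_apply] <;> omega
      have hf : f = monomial (Finsupp.single 0 n) (MvPolynomial.coeff (Finsupp.single 0 n) f) := by
        conv_lhs => rw [← f.support_sum_monomial_coeff]
        rw [Finset.sum_subset hsub (fun d _ hd => by
          rw [MvPolynomial.notMem_support_iff.mp hd, monomial_zero]), Finset.sum_singleton]
      have hc : MvPolynomial.coeff (Finsupp.single 0 n) f ≠ 0 := by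
        intro h
        apply hf0
        rw [hf, h, monomial_zero]
      rw [hf, mono_eq] at hPf
      rw [show (Finsupp.single (0 : Fin 2) n) (0 : Fin 2) = n from Finsupp.single_eq_same,
        show (Finsupp.single (0 : Fin 2) n) (1 : Fin 2) = 0 from
          Finsupp.single_eq_of_ne (by decide)] at hPf
      exact Pscale _ _ hc hPf
    | succ m ih =>
      intro f hPf hf0 hsupp
      by_cases hall : ∀ d ∈ f.support, d 1 ≤ m
      · exact ih f hPf hf0 hall
      push_neg at hall
      obtain ⟨D, hD, hDm⟩ := hall
      have hfmem : f ∈ SymSpace p n := hPf.choose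
      have hD1 : D 1 = m + 1 := by have := hsupp D hD; omega
      have hDdeg := supp_deg p hfmem hD
      have hdeg : ∀ d ∈ f.support, d 0 + d 1 = n := fun d hd => supp_deg p hfmem hd
      have hPf' : P (∑ t : ZMod p, algebraMap (ZMod p) (F p) (t ^ (p - 2)) •
          matAct p (uMat p t) f) :=
        Pop _ (fun t => Psmul _ _ (Pact _ _ hPf))
      rw [expand f hdeg] at hPf'
      set g : MvPolynomial (Fin 2) (F p) := ∑ d ∈ f.support,
        (MvPolynomial.coeff d f * -(d 1 : F p)) • (X 0 ^ (d 0 + 1) * X 1 ^ (d 1 - 1)) with hg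
      have hco : ∀ e : Fin 2 →₀ ℕ, MvPolynomial.coeff e g
          = ∑ d ∈ f.support, (MvPolynomial.coeff d f * -(d 1 : F p)) *
              (if Finsupp.single (0 : Fin 2) (d 0 + 1) + Finsupp.single (1 : Fin 2) (d 1 - 1) = e
                then 1 else 0) := by
        intro e
        rw [hg, MvPolynomial.coeff_sum]
        refine Finset.sum_congr rfl fun d _ => ?_
        rw [MvPolynomial.coeff_smul, coeff_mu p, smul_eq_mul]
      have hne' : g ≠ 0 := by
        intro h0
        have hE : MvPolynomial.coeff
            (Finsupp.single (0 : Fin 2) (D 0 + 1) + Finsupp.single (1 : Fin 2) m) g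
            = MvPolynomial.coeff D f * -(D 1 : F p) := by
          rw [hco, Finset.sum_eq_single_of_mem D hD]
          · rw [if_pos (by rw [hD1]; simp), mul_one]
          · intro b hb hbD
            rw [if_neg, mul_zero]
            intro hEq
            apply hbD
            have h0' := congrArg (fun v => v (0 : Fin 2)) hEq
            simp only [pair_app0] at h0'
            have hbdeg := hdeg b hb
            have hb0 : b 0 = D 0 := by omega
            have hb1 : b 1 = D 1 := by omega
            ext i
            fin_cases i
            · exact hb0
            · exact hb1
        rw [h0, MvPolynomial.coeff_zero] at hE
        have hcD : MvPolynomial.coeff D f ≠ 0 := MvPolynomial.mem_support_iff.mp hD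
        have hcast : ((D 1 : ℕ) : F p) ≠ 0 :=
          natCast_F_ne p (D 1) (by omega) (by omega)
        exact (mul_ne_zero hcD (neg_ne_zero.mpr hcast)) hE.symm
      have hsupp' : ∀ e ∈ g.support, e 1 ≤ m := by
        intro e he
        rw [MvPolynomial.mem_support_iff] at he
        by_contra hgt
        apply he
        rw [hco]
        refine Finset.sum_eq_zero fun d hd => ?_
        rw [if_neg, mul_zero]
        intro hEq
        have h1' := congrArg (fun v => v (1 : Fin 2)) hEq
        simp only [pair_app1] at h1'
        have hdm := hsupp d hd
        omega
      exact ih _ hPf' hne' hsupp'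
  -- Find a nonzero element of N
  obtain ⟨x, hxN, hx0⟩ := (Submodule.ne_bot_iff N).mp hNbot
  have hyx : ρ.asModuleEquiv.symm (ρ.asModuleEquiv x) = x := ρ.asModuleEquiv.symm_apply_apply x
  have hPy : P ((ρ.asModuleEquiv x : SymSpace p n) : MvPolynomial (Fin 2) (F p)) := by
    refine ⟨(ρ.asModuleEquiv x : SymSpace p n).2, ?_⟩
    rw [show (⟨((ρ.asModuleEquiv x : SymSpace p n) : MvPolynomial (Fin 2) (F p)),
      (ρ.asModuleEquiv x : SymSpace p n).2⟩ : SymSpace p n) = ρ.asModuleEquiv x from rfl, hyx]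
    exact hxN
  have hy0 : ((ρ.asModuleEquiv x : SymSpace p n) : MvPolynomial (Fin 2) (F p)) ≠ 0 := by
    intro h
    apply hx0
    have h2 : (ρ.asModuleEquiv x : SymSpace p n) = 0 := Subtype.ext h
    rw [← hyx, h2, map_zero]
  have PX0n' : P ((X 0 : MvPolynomial (Fin 2) (F p)) ^ n * X 1 ^ 0) :=
    climb n _ hPy hy0 (fun d hd => by
      have := supp_deg p (ρ.asModuleEquiv x : SymSpace p n).2 hd; omega)
  have PX0n : P ((X 0 : MvPolynomial (Fin 2) (F p)) ^ n) := by
    rw [pow_zero, mul_one] at PX0n'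
    exact PX0n'
  -- Generation of all monomials
  have Pmono : ∀ k : ℕ, k ≤ n → P (X 0 ^ (n - k) * X 1 ^ k : MvPolynomial (Fin 2) (F p)) := by
    intro k hk
    rcases Nat.eq_zero_or_pos k with rfl | hk1
    · rw [Nat.sub_zero, pow_zero, mul_one]
      exact PX0n
    · have h1 : P (∑ t : ZMod p, algebraMap (ZMod p) (F p) (t ^ (p - 1 - k)) •
          matAct p (lMat p t) ((X 0 : MvPolynomial (Fin 2) (F p)) ^ n)) :=
        Pop _ (fun t => Psmul _ _ (Pact _ _ PX0n))
      rw [sumL p n k hk1 hk hn] at h1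
      exact Pscale _ _ (neg_ne_zero.mpr (choose_F_ne p k n hk (by omega))) h1
  -- Conclusion: N = ⊤
  rw [Submodule.eq_top_iff']
  intro x
  have hyx : ρ.asModuleEquiv.symm (ρ.asModuleEquiv x) = x := ρ.asModuleEquiv.symm_apply_apply x
  have hP : P ((ρ.asModuleEquiv x : SymSpace p n) : MvPolynomial (Fin 2) (F p)) := by
    have hmem := (ρ.asModuleEquiv x : SymSpace p n).2
    conv in ((ρ.asModuleEquiv x : SymSpace p n) : MvPolynomial (Fin 2) (F p)) =>
      rw [← MvPolynomial.support_sum_monomial_coeff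
        ((ρ.asModuleEquiv x : SymSpace p n) : MvPolynomial (Fin 2) (F p))]
    refine Finset.sum_induction _ P Padd P0 fun d hd => ?_
    rw [mono_eq]
    apply Psmul
    have hdeg := supp_deg p hmem hd
    have hd0 : d 0 = n - d 1 := by omega
    rw [hd0]
    exact Pmono (d 1) (by omega)
  obtain ⟨hf, hN⟩ := hP
  rwa [show (⟨((ρ.asModuleEquiv x : SymSpace p n) : MvPolynomial (Fin 2) (F p)), hf⟩ :
    SymSpace p n) = ρ.asModuleEquiv x from rfl, hyx] at hN
end

section
/- Let p be an odd prime, and define V_{a,b} := det^a ⊗ Sym^{b-1} F̄_p^2 for 0 ≤ a ≤ p-2, 1 ≤ b ≤ p. Define k'(a,b) := a(p+1)+b+1 if a+b < p, and k'(a,b) := (a+1)(p+1)+bp-p^2 if a+b ≥ p. Then V_{a,b} is a Jordan–Hölder constituent of Sym^{k'(a,b)-2} F̄_p^2. -/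
open MvPolynomial

variable (p : ℕ) [Fact p.Prime]

/-! ### Auxiliary machinery for the proof of Statement 5 -/

section NatLemmas
open Finset
lemma choose_mul_choose_sub (u j t : ℕ) (hj : j ≤ u) :
    u.choose j * (u - j).choose t = u.choose t * (u - t).choose j := by
  rcases le_or_gt t (u - j) with h | h
  · have h1 : j ≤ u - t := by omega
    have := Nat.choose_mul (n := u) h
    rw [Nat.choose_symm hj] at this
    rw [this, Nat.sub_right_comm, Nat.choose_symm h1]
  · rw [Nat.choose_eq_zero_of_lt h, mul_zero]
    rcases le_or_gt t u with h2 | h2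
    · rw [Nat.choose_eq_zero_of_lt (show u - t < j by omega), mul_zero]
    · rw [Nat.choose_eq_zero_of_lt h2, zero_mul]

lemma prime_not_dvd_choose {p : ℕ} (hp : p.Prime) {n t : ℕ} (hn : n < p) (ht : t ≤ n) :
    ¬ (p ∣ n.choose t) := by
  intro hdvd
  have h1 : n.choose t * t.factorial * (n - t).factorial = n.factorial :=
    Nat.choose_mul_factorial_mul_factorial ht
  have : p ∣ n.factorial := h1 ▸ (hdvd.mul_right _).mul_right _
  rw [hp.dvd_factorial] at this
  omega

lemma cast_descFactorial_reflect {R : Type*} [CommRing R] {p : ℕ} [CharP R p]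
    {e0 e1 t : ℕ} (h : e0 + e1 + 1 = p + t) (h0 : t ≤ e0) (h1 : e0 + 1 ≤ p) :
    (e1.descFactorial t : R) = (-1) ^ t * (e0.descFactorial t : R) := by
  rw [Nat.descFactorial_eq_prod_range, Nat.descFactorial_eq_prod_range]
  rw [Nat.cast_prod, Nat.cast_prod]
  have key : ∀ i ∈ range t, ((e1 - i : ℕ) : R) = -(((e0 - (t - 1 - i) : ℕ) : R)) := by
    intro i hi
    rw [mem_range] at hi
    have hie : i ≤ e1 := by omega
    have h2 : t - 1 - i ≤ e0 := by omega
    rw [Nat.cast_sub hie, Nat.cast_sub h2]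
    have hp0 : ((p : ℕ) : R) = 0 := CharP.cast_eq_zero R p
    have hsum : ((e0 : R)) + (e1 : R) + 1 = (p : R) + (t : R) := by
      exact_mod_cast congrArg (Nat.cast : ℕ → R) h
    have hti : ((t - 1 - i : ℕ) : R) = (t : R) - 1 - (i : R) := by
      have h3 : ((t - 1 - i) + i + 1 : ℕ) = t := by omega
      have h4 := congrArg (Nat.cast : ℕ → R) h3
      push_cast at h4
      linear_combination h4
    rw [hti, hp0] at *
    linear_combination hsum
  rw [Finset.prod_congr rfl key]
  rw [Finset.prod_congr rfl
      (fun i (_ : i ∈ range t) => (neg_one_mul (((e0 - (t - 1 - i) : ℕ) : R))).symm),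
    Finset.prod_mul_distrib, Finset.prod_const, Finset.card_range,
    Finset.prod_range_reflect (fun i => ((e0 - i : ℕ) : R)) t]
end NatLemmas

section DD
variable {K : Type*} [Field K] (p t : ℕ) [Fact p.Prime] [CharP K p]

/-- The coefficient family of the equivariant "reduction" map
`Sym^{p+t-1} -> det^t tensor Sym^{p-t-1}`. -/
noncomputable def dd (k : ℕ) : K := if k ≤ p - 1 then (k.choose t : K) else 0

variable {p t}

omit [Fact p.Prime] [CharP K p] in
lemma dd_of_le {k : ℕ} (h : k ≤ p - 1) : dd (K := K) p t k = (k.choose t : K) := if_pos h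

omit [Fact p.Prime] [CharP K p] in
lemma dd_of_gt {k : ℕ} (h : p - 1 < k) : dd (K := K) p t k = 0 := if_neg (by omega)

lemma dd_lower {u j : ℕ} (ht : t ≤ p - 1) (hu : u ≤ p + t - 1) (hj : j ≤ u) :
    (u.choose j : K) * dd p t (u - j) = dd p t u * ((u - t).choose j : K) := by
  have hp : p.Prime := Fact.out
  have hp2 := hp.two_le
  rcases le_or_gt u (p - 1) with h | h
  · rw [dd_of_le h, dd_of_le (show u - j ≤ p - 1 by omega)]
    rw [← Nat.cast_mul, ← Nat.cast_mul, choose_mul_choose_sub u j t hj]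
  · rw [dd_of_gt h, zero_mul]
    rcases le_or_gt j (p - 1) with hj2 | hj2
    · rcases le_or_gt (u - j) (p - 1) with h2 | h2
      · rw [dd_of_le h2]
        have hdvd : (p : ℕ) ∣ u.choose j := hp.dvd_choose (by omega) (by omega) (by omega)
        have hz : ((u.choose j : ℕ) : K) = 0 := (CharP.cast_eq_zero_iff K p _).mpr hdvd
        rw [hz, zero_mul]
      · rw [dd_of_gt h2, mul_zero]
    · rw [dd_of_le (show u - j ≤ p - 1 by omega),
        Nat.choose_eq_zero_of_lt (show u - j < t by omega), Nat.cast_zero, mul_zero]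

lemma dd_key {u i : ℕ} (ht : t ≤ p - 1) (hu : u ≤ p + t - 1) (htu : t ≤ u) (hi : i ≤ u - t) :
    (u.choose (t + i) : K) * dd p t (t + i) = dd p t u * ((u - t).choose i : K) := by
  have h := dd_lower (K := K) ht hu (show u - (t + i) ≤ u by omega)
  rw [show u - (u - (t + i)) = t + i by omega] at h
  rw [Nat.choose_symm (show t + i ≤ u by omega)] at h
  rw [show u - (t + i) = (u - t) - i by omega, Nat.choose_symm hi] at h
  exact h

lemma dd_reflect {e0 e1 : ℕ} (ht : t ≤ p - 1) (h : e0 + e1 + 1 = p + t) :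
    dd (K := K) p t e1 = (-1) ^ t * dd (K := K) p t e0 := by
  have hp : p.Prime := Fact.out
  have hp2 := hp.two_le
  rcases le_or_gt e0 (p - 1) with h0 | h0
  · rcases le_or_gt t e0 with h1 | h1
    · have he1 : e1 ≤ p - 1 := by omega
      rw [dd_of_le he1, dd_of_le h0]
      have hfac : ((t.factorial : ℕ) : K) ≠ 0 := by
        rw [Ne, CharP.cast_eq_zero_iff K p, hp.dvd_factorial]; omega
      apply mul_right_cancel₀ hfac
      have h2 : ((e1.descFactorial t : ℕ) : K) = (-1) ^ t * (e0.descFactorial t : K) :=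
        cast_descFactorial_reflect (p := p) (by omega) h1 (by omega)
      rw [Nat.descFactorial_eq_factorial_mul_choose, Nat.descFactorial_eq_factorial_mul_choose] at h2
      push_cast at h2 ⊢
      linear_combination h2
    · rw [dd_of_gt (show p - 1 < e1 by omega), dd_of_le h0,
        Nat.choose_eq_zero_of_lt h1, Nat.cast_zero, mul_zero]
  · rw [dd_of_le (show e1 ≤ p - 1 by omega), dd_of_gt h0,
      Nat.choose_eq_zero_of_lt (show e1 < t by omega), Nat.cast_zero, mul_zero]

lemma dd_ne_zero_of_band {k : ℕ} (h1 : t ≤ k) (h2 : k ≤ p - 1) : dd (K := K) p t k ≠ 0 := by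
  have hp : p.Prime := Fact.out
  have hp2 := hp.two_le
  rw [dd_of_le h2, Ne, CharP.cast_eq_zero_iff K p]
  exact prime_not_dvd_choose hp (by omega) h1

lemma band_of_dd_ne_zero {k : ℕ} (h : dd (K := K) p t k ≠ 0) : t ≤ k ∧ k ≤ p - 1 := by
  rcases le_or_gt k (p - 1) with h2 | h2
  · rcases le_or_gt t k with h1 | h1
    · exact ⟨h1, h2⟩
    · exact absurd (dd_of_le (K := K) h2) (by
        intro hh
        exact h (by rw [hh, Nat.choose_eq_zero_of_lt h1, Nat.cast_zero]))
  · exact absurd (dd_of_gt (K := K) h2) h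

omit [Fact p.Prime] [CharP K p] in
lemma dd_zero_of_lt {k : ℕ} (h1 : k < t) (h2 : k ≤ p - 1) : dd (K := K) p t k = 0 := by
  rw [dd_of_le h2, Nat.choose_eq_zero_of_lt h1, Nat.cast_zero]

end DD


section AuxPoly

open Finset

/-- The action of an arbitrary matrix (not necessarily invertible) on polynomials. -/
noncomputable def mAct (M : Matrix (Fin 2) (Fin 2) (ZMod p)) :
    MvPolynomial (Fin 2) (F p) →ₐ[F p] MvPolynomial (Fin 2) (F p) :=
  aeval fun i => ∑ j, algebraMap (ZMod p) (F p) (M j i) • X j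

theorem matAct_eq_mAct (g : GL2 p) : matAct p g = mAct p g.val := rfl

theorem mAct_mul (M N : Matrix (Fin 2) (Fin 2) (ZMod p)) :
    mAct p (M * N) = (mAct p M).comp (mAct p N) := by
  apply MvPolynomial.algHom_ext
  intro i
  simp only [mAct, AlgHom.comp_apply, aeval_X, map_sum, map_smul, Matrix.mul_apply]
  simp [Finset.smul_sum, smul_smul, map_sum, map_mul,
    Finset.sum_comm (s := (Finset.univ : Finset (Fin 2))), mul_comm,
    add_smul, Finset.sum_add_distrib, add_comm]
  simp only [← map_mul, algebraMap_smul]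
  abel

theorem mAct_mem (M : Matrix (Fin 2) (Fin 2) (ZMod p)) (n : ℕ) :
    ∀ x ∈ SymSpace p n, mAct p M x ∈ SymSpace p n := by
  intro x hx
  rw [mem_homogeneousSubmodule] at hx
  have h1 : ∀ i, (∑ j, algebraMap (ZMod p) (F p) (M j i) •
      (X j : MvPolynomial (Fin 2) (F p))).IsHomogeneous 1 := by
    intro i
    apply IsHomogeneous.sum
    intro j _
    rw [MvPolynomial.smul_eq_C_mul]
    exact (isHomogeneous_X _ _).C_mul _
  have h2 := hx.aeval (fun i => ∑ j, algebraMap (ZMod p) (F p) (M j i) • X j)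
    (fun i => h1 i)
  rw [one_mul] at h2
  exact (mem_homogeneousSubmodule _ _).mpr h2

theorem degree_fin2 (d : Fin 2 →₀ ℕ) : d.degree = d 0 + d 1 := by
  rw [Finsupp.degree_apply, Finset.sum_subset (Finset.subset_univ _)
    (by intro x _ hx; simpa [Finsupp.mem_support_iff] using hx)]
  exact Fin.sum_univ_two d

theorem fin2_finsupp_eq (e : Fin 2 →₀ ℕ) :
    e = Finsupp.single 0 (e 0) + Finsupp.single 1 (e 1) := by
  ext i
  fin_cases i <;> simp [Finsupp.single_apply]

/-- The exponent finsupp of the monomial `X^u Y^v`. -/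
noncomputable def E2 (u v : ℕ) : Fin 2 →₀ ℕ := Finsupp.single 0 u + Finsupp.single 1 v

theorem E2_apply_zero (u v : ℕ) : E2 u v 0 = u := by
  simp [E2, Finsupp.single_apply]

theorem E2_apply_one (u v : ℕ) : E2 u v 1 = v := by
  simp [E2, Finsupp.single_apply]

theorem degree_E2 (u v : ℕ) : (E2 u v).degree = u + v := by
  rw [degree_fin2, E2_apply_zero, E2_apply_one]

theorem mono2_eq (u v : ℕ) (c : F p) :
    monomial (E2 u v) c = C c * X 0 ^ u * X 1 ^ v := by
  rw [monomial_eq, Finsupp.prod_fintype _ _ (fun i => pow_zero _), Fin.prod_univ_two,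
    E2_apply_zero, E2_apply_one, mul_assoc]

theorem fin2_finsupp_eq' (e : Fin 2 →₀ ℕ) : e = E2 (e 0) (e 1) := by
  rw [E2]; exact fin2_finsupp_eq e

/-- The reduction map `Sym^{p+t-1} -> det^t tensor Sym^{p-t-1}` on the ambient
polynomial ring, sending `X^u Y^v` to `(u choose t) X^{u-t} Y^{v-t}` when `u ≤ p-1`,
and to `0` otherwise. -/
noncomputable def Tmap (t : ℕ) :
    MvPolynomial (Fin 2) (F p) →ₗ[F p] MvPolynomial (Fin 2) (F p) :=
  (basisMonomials (Fin 2) (F p)).constr (F p) fun e =>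
    monomial (E2 (e 0 - t) (e 1 - t)) (dd p t (e 0))

theorem Tmap_monomial (t : ℕ) (e : Fin 2 →₀ ℕ) (c : F p) :
    Tmap p t (monomial e c) =
      monomial (E2 (e 0 - t) (e 1 - t)) (dd p t (e 0) * c) := by
  have h : monomial e c = c • (basisMonomials (Fin 2) (F p)) e := by
    rw [coe_basisMonomials, smul_monomial, smul_eq_mul, mul_one]
  rw [h, map_smul, Tmap, Module.Basis.constr_basis, smul_monomial, smul_eq_mul, mul_comm]

theorem Tmap_mono2 (t u v : ℕ) (c : F p) :
    Tmap p t (monomial (E2 u v) c) = monomial (E2 (u - t) (v - t)) (dd p t u * c) := by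
  rw [Tmap_monomial, E2_apply_zero, E2_apply_one]


theorem Tmap_mem (t : ℕ) {f : MvPolynomial (Fin 2) (F p)} (hf : f ∈ SymSpace p (p + t - 1)) :
    Tmap p t f ∈ SymSpace p (p - t - 1) := by
  have hp2 : 2 ≤ p := (Fact.out : p.Prime).two_le
  rw [mem_homogeneousSubmodule] at hf
  have hsum : Tmap p t f = ∑ e ∈ f.support, Tmap p t (monomial e (coeff e f)) := by
    rw [← map_sum, ← f.as_sum]
  rw [hsum]
  apply Submodule.sum_mem
  intro e he
  have hdeg : e.degree = p + t - 1 := by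
    have h := hf (mem_support_iff.mp he)
    rwa [Pi.one_def, ← Finsupp.degree_eq_weight_one] at h
  rw [Tmap_monomial]
  rw [degree_fin2] at hdeg
  rcases le_or_gt (e 0) (p - 1) with h0 | h0
  · rcases le_or_gt t (e 0) with h1 | h1
    · refine (mem_homogeneousSubmodule _ _).mpr (isHomogeneous_monomial _ ?_)
      rw [degree_E2]
      omega
    · rw [dd_zero_of_lt h1 h0, zero_mul, monomial_zero]
      exact Submodule.zero_mem _
  · rw [dd_of_gt h0, zero_mul, monomial_zero]
    exact Submodule.zero_mem _

/-- Section of the reduction map, used to prove surjectivity. -/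
noncomputable def Smap (t : ℕ) :
    MvPolynomial (Fin 2) (F p) →ₗ[F p] MvPolynomial (Fin 2) (F p) :=
  (basisMonomials (Fin 2) (F p)).constr (F p) fun e =>
    monomial (E2 (e 0 + t) (e 1 + t)) ((((e 0 + t).choose t : F p))⁻¹)

theorem Smap_monomial (t : ℕ) (e : Fin 2 →₀ ℕ) (c : F p) :
    Smap p t (monomial e c) =
      monomial (E2 (e 0 + t) (e 1 + t)) ((((e 0 + t).choose t : F p))⁻¹ * c) := by
  have h : monomial e c = c • (basisMonomials (Fin 2) (F p)) e := by
    rw [coe_basisMonomials, smul_monomial, smul_eq_mul, mul_one]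
  rw [h, map_smul, Smap, Module.Basis.constr_basis, smul_monomial, smul_eq_mul, mul_comm]

theorem Smap_mem (t : ℕ) (ht : t ≤ p - 1) {f : MvPolynomial (Fin 2) (F p)}
    (hf : f ∈ SymSpace p (p - t - 1)) : Smap p t f ∈ SymSpace p (p + t - 1) := by
  have hp2 : 2 ≤ p := (Fact.out : p.Prime).two_le
  rw [mem_homogeneousSubmodule] at hf
  have hsum : Smap p t f = ∑ e ∈ f.support, Smap p t (monomial e (coeff e f)) := by
    rw [← map_sum, ← f.as_sum]
  rw [hsum]
  apply Submodule.sum_mem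
  intro e he
  have hdeg : e.degree = p - t - 1 := by
    have h := hf (mem_support_iff.mp he)
    rwa [Pi.one_def, ← Finsupp.degree_eq_weight_one] at h
  rw [degree_fin2] at hdeg
  rw [Smap_monomial]
  refine (mem_homogeneousSubmodule _ _).mpr (isHomogeneous_monomial _ ?_)
  rw [degree_E2]
  omega

theorem Tmap_Smap (t : ℕ) (ht : t ≤ p - 1) {f : MvPolynomial (Fin 2) (F p)}
    (hf : f ∈ SymSpace p (p - t - 1)) : Tmap p t (Smap p t f) = f := by
  have hp : p.Prime := Fact.out
  have hp2 : 2 ≤ p := hp.two_le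
  rw [mem_homogeneousSubmodule] at hf
  conv_rhs => rw [f.as_sum]
  have hsum : Tmap p t (Smap p t f) =
      ∑ e ∈ f.support, Tmap p t (Smap p t (monomial e (coeff e f))) := by
    rw [← map_sum, ← map_sum, ← f.as_sum]
  rw [hsum]
  apply Finset.sum_congr rfl
  intro e he
  have hdeg : e.degree = p - t - 1 := by
    have h := hf (mem_support_iff.mp he)
    rwa [Pi.one_def, ← Finsupp.degree_eq_weight_one] at h
  rw [degree_fin2] at hdeg
  have he0 : e 0 + t ≤ p - 1 := by omega
  rw [Smap_monomial, Tmap_mono2, Nat.add_sub_cancel, Nat.add_sub_cancel, dd_of_le he0]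
  have hne : (((e 0 + t).choose t : ℕ) : F p) ≠ 0 := by
    rw [Ne, CharP.cast_eq_zero_iff (F p) p]
    exact prime_not_dvd_choose hp (by omega) (by omega)
  rw [← mul_assoc, mul_inv_cancel₀ hne, one_mul, ← fin2_finsupp_eq']


end AuxPoly


section Equivariance

open Finset

/-- The `w` matrix swapping the two variables. -/
def wM : Matrix (Fin 2) (Fin 2) (ZMod p) := !![0, 1; 1, 0]

theorem mAct_X0_w : mAct p (wM p) (X 0) = X 1 := by
  simp [mAct, wM, Fin.sum_univ_two]

theorem mAct_X1_w : mAct p (wM p) (X 1) = X 0 := by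
  simp [mAct, wM, Fin.sum_univ_two]

theorem mAct_C (M : Matrix (Fin 2) (Fin 2) (ZMod p)) (c : F p) :
    mAct p M (C c) = C c := by
  rw [mAct, aeval_C, algebraMap_eq]

theorem mAct_mono2_w (u v : ℕ) (c : F p) :
    mAct p (wM p) (monomial (E2 u v) c) = monomial (E2 v u) c := by
  rw [mono2_eq, map_mul, map_mul, mAct_C, map_pow, map_pow, mAct_X0_w, mAct_X1_w,
    mono2_eq]
  ring

theorem mAct_mono2_diag (dv : Fin 2 → ZMod p) (u v : ℕ) (c : F p) :
    mAct p (Matrix.diagonal dv) (monomial (E2 u v) c) =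
      (algebraMap (ZMod p) (F p) (dv 0) ^ u * algebraMap (ZMod p) (F p) (dv 1) ^ v) •
        monomial (E2 u v) c := by
  have h0 : mAct p (Matrix.diagonal dv) (X 0) = algebraMap (ZMod p) (F p) (dv 0) • X 0 := by
    simp [mAct, Fin.sum_univ_two, Matrix.diagonal, Matrix.of_apply]
  have h1 : mAct p (Matrix.diagonal dv) (X 1) = algebraMap (ZMod p) (F p) (dv 1) • X 1 := by
    simp [mAct, Fin.sum_univ_two, Matrix.diagonal, Matrix.of_apply]
  rw [mono2_eq, map_mul, map_mul, mAct_C, map_pow, map_pow, h0, h1,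
    smul_pow, smul_pow, smul_eq_C_mul, smul_eq_C_mul, smul_eq_C_mul, C_mul, C_pow, C_pow]
  ring

/-- Normal form of the terms occurring in the binomial expansion of the action of a
lower transvection on a monomial. -/
theorem term_norm (k b d : ℕ) (s : F p) (n : ℕ) :
    (X 0 : MvPolynomial (Fin 2) (F p)) ^ k * (s • X 1) ^ b * (n : MvPolynomial (Fin 2) (F p))
      * X 1 ^ d = monomial (E2 k (b + d)) (s ^ b * n) := by
  rw [← C_eq_coe_nat, mono2_eq, smul_pow, smul_eq_C_mul, C_mul, pow_add]
  ring

/-- `TProp p t M` says that the reduction map `Tmap p t` is equivariant (with a twist by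
`det^t`) for the action of the matrix `M` on homogeneous polynomials of degree `p+t-1`. -/
def TProp (t : ℕ) (M : Matrix (Fin 2) (Fin 2) (ZMod p)) : Prop :=
  ∀ f ∈ SymSpace p (p + t - 1),
    Tmap p t (mAct p M f) =
      (algebraMap (ZMod p) (F p) M.det) ^ t • mAct p M (Tmap p t f)

theorem TProp_mul (t : ℕ) {A B : Matrix (Fin 2) (Fin 2) (ZMod p)}
    (hA : TProp p t A) (hB : TProp p t B) : TProp p t (A * B) := by
  intro f hf
  rw [mAct_mul]
  simp only [AlgHom.comp_apply]
  rw [hA _ (mAct_mem p B _ f hf), hB f hf, map_smul, smul_smul, Matrix.det_mul, map_mul,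
    mul_pow]

theorem TProp_of_monomials (t : ℕ) (M : Matrix (Fin 2) (Fin 2) (ZMod p))
    (h : ∀ u v : ℕ, u + v = p + t - 1 →
      Tmap p t (mAct p M (monomial (E2 u v) 1)) =
        (algebraMap (ZMod p) (F p) M.det) ^ t • mAct p M (Tmap p t (monomial (E2 u v) 1))) :
    TProp p t M := by
  intro f hf
  rw [mem_homogeneousSubmodule] at hf
  conv_lhs => rw [f.as_sum]
  conv_rhs => rw [f.as_sum]
  rw [map_sum, map_sum, map_sum, map_sum, Finset.smul_sum]
  apply Finset.sum_congr rfl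
  intro e he
  have hdeg : e 0 + e 1 = p + t - 1 := by
    have h2 := hf (mem_support_iff.mp he)
    rw [Pi.one_def, ← Finsupp.degree_eq_weight_one, degree_fin2] at h2
    exact h2
  have hmono : monomial e (coeff e f) = coeff e f • monomial (E2 (e 0) (e 1)) (1 : F p) := by
    rw [smul_monomial, smul_eq_mul, mul_one, ← fin2_finsupp_eq']
  rw [hmono, map_smul, map_smul, map_smul, map_smul, h (e 0) (e 1) hdeg, smul_comm]

theorem TProp_diag (t : ℕ) (dv : Fin 2 → ZMod p) : TProp p t (Matrix.diagonal dv) := by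
  apply TProp_of_monomials
  intro u v huv
  have hp2 : 2 ≤ p := (Fact.out : p.Prime).two_le
  rw [mAct_mono2_diag, map_smul, Tmap_mono2, mAct_mono2_diag,
    Matrix.det_diagonal, Fin.prod_univ_two, _root_.map_mul (algebraMap (ZMod p) (F p)) (dv 0) (dv 1)]
  set a := algebraMap (ZMod p) (F p) (dv 0)
  set b := algebraMap (ZMod p) (F p) (dv 1)
  rcases eq_or_ne (dd p t u : F p) 0 with h0 | h0
  · rw [h0, zero_mul, monomial_zero, smul_zero, smul_zero, smul_zero]
  · obtain ⟨h1, h2⟩ := band_of_dd_ne_zero h0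
    have hvt : t ≤ v := by omega
    rw [smul_smul]
    congr 1
    have ha : a ^ u = a ^ t * a ^ (u - t) := by
      rw [← pow_add]; congr 1; omega
    have hb : b ^ v = b ^ t * b ^ (v - t) := by
      rw [← pow_add]; congr 1; omega
    rw [ha, hb, mul_pow]
    ring

theorem TProp_w (t : ℕ) (ht : t ≤ p - 1) : TProp p t (wM p) := by
  apply TProp_of_monomials
  intro u v huv
  have hp2 : 2 ≤ p := (Fact.out : p.Prime).two_le
  have hdet : (wM p).det = -1 := by
    simp [wM, Matrix.det_fin_two]
  rw [mAct_mono2_w, Tmap_mono2, Tmap_mono2, mAct_mono2_w, hdet, map_neg, map_one,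
    smul_monomial]
  congr 1
  rw [smul_eq_mul, mul_one, mul_one]
  exact dd_reflect ht (by omega)

theorem mAct_mul_apply (M : Matrix (Fin 2) (Fin 2) (ZMod p)) (a b : MvPolynomial (Fin 2) (F p)) :
    mAct p M (a * b) = mAct p M a * mAct p M b := map_mul _ _ _

theorem mAct_pow_apply (M : Matrix (Fin 2) (Fin 2) (ZMod p)) (a : MvPolynomial (Fin 2) (F p))
    (n : ℕ) : mAct p M (a ^ n) = (mAct p M a) ^ n := map_pow _ _ _

set_option maxHeartbeats 1000000 in
theorem TProp_lower (t : ℕ) (ht : t ≤ p - 1) (c : ZMod p) :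
    TProp p t (Matrix.transvection 1 0 c) := by
  apply TProp_of_monomials
  intro u v huv
  have hp : p.Prime := Fact.out
  have hp2 : 2 ≤ p := hp.two_le
  set c' := algebraMap (ZMod p) (F p) c with hc'
  have hdet : (Matrix.transvection (1 : Fin 2) 0 c).det = 1 :=
    Matrix.det_transvection_of_ne 1 0 (by decide) c
  have hX0 : mAct p (Matrix.transvection 1 0 c) (X 0) = X 0 + c' • X 1 := by
    simp [mAct, Fin.sum_univ_two, Matrix.transvection, Matrix.single, Matrix.one_apply]
    rw [hc', algebraMap_smul]
  have hX1 : mAct p (Matrix.transvection 1 0 c) (X 1) = X 1 := by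
    simp [mAct, Fin.sum_univ_two, Matrix.transvection, Matrix.single, Matrix.one_apply]
  rw [hdet, _root_.map_one (algebraMap (ZMod p) (F p)), one_pow, one_smul, Tmap_mono2, mul_one]
  have hM : mAct p (Matrix.transvection 1 0 c) (monomial (E2 u v) 1)
      = ∑ k ∈ Finset.range (u + 1), X 0 ^ k * (c' • X 1) ^ (u - k) *
          ((u.choose k : ℕ) : MvPolynomial (Fin 2) (F p)) * X 1 ^ v := by
    rw [mono2_eq, mAct_mul_apply, mAct_mul_apply, mAct_C, mAct_pow_apply, mAct_pow_apply,
      hX0, hX1, C_1, one_mul, add_pow, Finset.sum_mul]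
  rw [hM, map_sum]
  have hterm : ∀ k ∈ Finset.range (u + 1),
      Tmap p t (X 0 ^ k * (c' • X 1) ^ (u - k) *
          ((u.choose k : ℕ) : MvPolynomial (Fin 2) (F p)) * X 1 ^ v)
        = monomial (E2 (k - t) ((u - k + v) - t))
            (dd p t k * (c' ^ (u - k) * ((u.choose k : ℕ) : F p))) := by
    intro k _
    rw [term_norm, Tmap_mono2]
  rw [Finset.sum_congr rfl hterm]
  rcases eq_or_ne (dd p t u : F p) 0 with h0 | h0
  · rw [h0, monomial_zero, map_zero]
    apply Finset.sum_eq_zero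
    intro k hk
    rw [Finset.mem_range] at hk
    have hcoeff : dd p t k * ((u.choose k : ℕ) : F p) = 0 := by
      rcases le_or_gt t k with h1 | h1
      · rcases le_or_gt k (p - 1) with h2 | h2
        · have hu : p - 1 < u := by
            by_contra hcon
            push_neg at hcon
            rcases le_or_gt t u with h3 | h3
            · exact (dd_ne_zero_of_band h3 hcon) h0
            · omega
          have hdvd : (p : ℕ) ∣ u.choose k := hp.dvd_choose (by omega) (by omega) (by omega)
          rw [(CharP.cast_eq_zero_iff (F p) p _).mpr hdvd, mul_zero]
        · rw [dd_of_gt h2, zero_mul]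
      · rw [dd_zero_of_lt h1 (by omega), zero_mul]
    rw [show dd p t k * (c' ^ (u - k) * ((u.choose k : ℕ) : F p))
        = (dd p t k * ((u.choose k : ℕ) : F p)) * c' ^ (u - k) from by ring, hcoeff, zero_mul,
      monomial_zero]
  · obtain ⟨h1, h2⟩ := band_of_dd_ne_zero h0
    have hvt : t ≤ v := by omega
    have hM2 : mAct p (Matrix.transvection 1 0 c) (monomial (E2 (u - t) (v - t)) (dd p t u))
        = ∑ j ∈ Finset.range (u - t + 1), C (dd p t u) * (X 0 ^ j * (c' • X 1) ^ (u - t - j) *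
            (((u - t).choose j : ℕ) : MvPolynomial (Fin 2) (F p))) * X 1 ^ (v - t) := by
      rw [mono2_eq, mAct_mul_apply, mAct_mul_apply, mAct_C, mAct_pow_apply, mAct_pow_apply,
        hX0, hX1, add_pow, Finset.mul_sum, Finset.sum_mul]
    rw [hM2]
    have hterm2 : ∀ j ∈ Finset.range (u - t + 1),
        C (dd p t u) * (X 0 ^ j * (c' • X 1) ^ (u - t - j) *
            (((u - t).choose j : ℕ) : MvPolynomial (Fin 2) (F p))) * X 1 ^ (v - t)
          = monomial (E2 j ((u - t - j) + (v - t)))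
              (dd p t u * (c' ^ (u - t - j) * (((u - t).choose j : ℕ) : F p))) := by
      intro j _
      rw [show C (dd p t u) * (X 0 ^ j * (c' • X 1) ^ (u - t - j) *
            (((u - t).choose j : ℕ) : MvPolynomial (Fin 2) (F p))) * X 1 ^ (v - t)
          = C (dd p t u) * (X 0 ^ j * (c' • X 1) ^ (u - t - j) *
            (((u - t).choose j : ℕ) : MvPolynomial (Fin 2) (F p)) * X 1 ^ (v - t)) from by ring,
        term_norm, C_mul_monomial]
    rw [Finset.sum_congr rfl hterm2]
    have hsub : Finset.Ico t (u + 1) ⊆ Finset.range (u + 1) := by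
      intro x hx
      rw [Finset.mem_Ico] at hx
      rw [Finset.mem_range]
      omega
    rw [← Finset.sum_subset hsub (by
      intro k hk1 hk2
      rw [Finset.mem_range] at hk1
      rw [Finset.mem_Ico] at hk2
      have hkt : k < t := by omega
      rw [dd_zero_of_lt hkt (by omega), zero_mul, monomial_zero])]
    rw [Finset.sum_Ico_eq_sum_range, show u + 1 - t = u - t + 1 from by omega]
    apply Finset.sum_congr rfl
    intro i hi
    rw [Finset.mem_range] at hi
    have hiu : i ≤ u - t := by omega
    have hu : u ≤ p + t - 1 := by omega
    rw [show t + i - t = i from by omega, show u - (t + i) + v - t = u - t - i + (v - t) from by omega,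
      show u - (t + i) = u - t - i from by omega]
    congr 1
    have hkey := dd_key (K := F p) ht hu h1 hiu
    linear_combination c' ^ (u - t - i) * hkey

theorem transvection01_eq (c : ZMod p) :
    Matrix.transvection (0 : Fin 2) 1 c = wM p * Matrix.transvection 1 0 c * wM p := by
  ext i j
  fin_cases i <;> fin_cases j <;>
    simp [Matrix.transvection, wM, Matrix.mul_apply, Fin.sum_univ_two, Matrix.single,
      Matrix.one_apply, Matrix.vecMul, dotProduct, Matrix.vecHead, Matrix.vecTail,
      Matrix.add_apply, Matrix.of_apply]

theorem TProp_transvection (t : ℕ) (ht : t ≤ p - 1)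
    (ts : Matrix.TransvectionStruct (Fin 2) (ZMod p)) : TProp p t ts.toMatrix := by
  obtain ⟨i, j, hij, c⟩ := ts
  rw [Matrix.TransvectionStruct.toMatrix_mk]
  fin_cases i <;> fin_cases j
  · exact absurd rfl hij
  · show TProp p t (Matrix.transvection 0 1 c)
    rw [transvection01_eq]
    exact TProp_mul p t (TProp_mul p t (TProp_w p t ht) (TProp_lower p t ht c)) (TProp_w p t ht)
  · exact TProp_lower p t ht c
  · exact absurd rfl hij

theorem Tmap_equiv (t : ℕ) (ht : t ≤ p - 1) (M : Matrix (Fin 2) (Fin 2) (ZMod p)) :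
    TProp p t M :=
  Matrix.diagonal_transvection_induction (TProp p t) M (fun dv _ => TProp_diag p t dv)
    (TProp_transvection p t ht) (fun _ _ hA hB => TProp_mul p t hA hB)

end Equivariance

section Theta

open Finset

/-- The Dickson invariant `θ = X Y^p - X^p Y`, semi-invariant of weight `det`. -/
noncomputable def theta : MvPolynomial (Fin 2) (F p) :=
  X 0 * X 1 ^ p - X 0 ^ p * X 1

theorem isHomogeneous_pow {φ : MvPolynomial (Fin 2) (F p)} {m : ℕ}
    (hφ : φ.IsHomogeneous m) (n : ℕ) : (φ ^ n).IsHomogeneous (m * n) := by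
  induction n with
  | zero => simpa using isHomogeneous_one (Fin 2) (F p)
  | succ k ih =>
    rw [pow_succ, Nat.mul_succ]
    exact ih.mul hφ

theorem theta_isHomogeneous : (theta p).IsHomogeneous (p + 1) := by
  have h1 : ((X 0 * X 1 ^ p) : MvPolynomial (Fin 2) (F p)).IsHomogeneous (p + 1) := by
    have := (isHomogeneous_X (F p) (0 : Fin 2)).mul (isHomogeneous_pow p (isHomogeneous_X (F p) (1 : Fin 2)) p)
    rw [one_mul] at this
    rw [add_comm]
    exact this
  have h2 : ((X 0 ^ p * X 1) : MvPolynomial (Fin 2) (F p)).IsHomogeneous (p + 1) := by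
    have := (isHomogeneous_pow p (isHomogeneous_X (F p) (0 : Fin 2)) p).mul
      (isHomogeneous_X (F p) (1 : Fin 2))
    rw [one_mul] at this
    exact this
  exact h1.sub h2

theorem theta_ne_zero : theta p ≠ 0 := by
  have hp2 : 2 ≤ p := (Fact.out : p.Prime).two_le
  intro h
  have h1 : (X 0 * X 1 ^ p : MvPolynomial (Fin 2) (F p)) = monomial (E2 1 p) 1 := by
    rw [mono2_eq, C_1, one_mul, pow_one]
  have h2 : (X 0 ^ p * X 1 : MvPolynomial (Fin 2) (F p)) = monomial (E2 p 1) 1 := by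
    rw [mono2_eq, C_1, one_mul, pow_one]
  have h3 := congrArg (coeff (E2 1 p)) h
  rw [theta, coeff_sub, h1, h2, coeff_monomial, coeff_monomial, if_pos rfl, if_neg (by
    intro hh
    have := congrArg (fun e => e 0) hh
    simp only [E2_apply_zero] at this
    omega), coeff_zero, sub_zero] at h3
  exact one_ne_zero h3

theorem frob_linear (z w : ZMod p) :
    ((algebraMap (ZMod p) (F p) z) • (X 0 : MvPolynomial (Fin 2) (F p))
      + (algebraMap (ZMod p) (F p) w) • X 1) ^ p
    = (algebraMap (ZMod p) (F p) z) • (X 0 : MvPolynomial (Fin 2) (F p)) ^ p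
      + (algebraMap (ZMod p) (F p) w) • X 1 ^ p := by
  rw [add_pow_char, smul_pow, smul_pow, ← map_pow, ← map_pow, ZMod.pow_card, ZMod.pow_card]

theorem mAct_theta (M : Matrix (Fin 2) (Fin 2) (ZMod p)) :
    mAct p M (theta p) = algebraMap (ZMod p) (F p) M.det • theta p := by
  have hX0 : mAct p M (X 0) = algebraMap (ZMod p) (F p) (M 0 0) • X 0
      + algebraMap (ZMod p) (F p) (M 1 0) • X 1 := by
    simp [mAct, Fin.sum_univ_two]
  have hX1 : mAct p M (X 1) = algebraMap (ZMod p) (F p) (M 0 1) • X 0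
      + algebraMap (ZMod p) (F p) (M 1 1) • X 1 := by
    simp [mAct, Fin.sum_univ_two]
  rw [theta, map_sub, mAct_mul_apply, mAct_pow_apply, mAct_mul_apply, mAct_pow_apply,
    hX0, hX1, frob_linear, frob_linear, Matrix.det_fin_two, map_sub, map_mul, map_mul]
  simp only [smul_eq_C_mul, C_sub, C_mul]
  ring

theorem mAct_theta_pow_mul (M : Matrix (Fin 2) (Fin 2) (ZMod p)) (n : ℕ)
    (f : MvPolynomial (Fin 2) (F p)) :
    mAct p M (theta p ^ n * f) =
      (algebraMap (ZMod p) (F p) M.det) ^ n • (theta p ^ n * mAct p M f) := by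
  rw [mAct_mul_apply, mAct_pow_apply, mAct_theta, smul_pow, smul_mul_assoc]

end Theta

section Glue

variable {V W : Type} [AddCommGroup V] [Module (F p) V] [AddCommGroup W] [Module (F p) W]

theorem commute_asAlgebraHom (ρV : Representation (F p) (GL2 p) V)
    (ρW : Representation (F p) (GL2 p) W) (φ : V →ₗ[F p] W)
    (hφ : ∀ (g : GL2 p) (v : V), φ (ρV g v) = ρW g (φ v))
    (r : MonoidAlgebra (F p) (GL2 p)) (v : V) :
    φ (ρV.asAlgebraHom r v) = ρW.asAlgebraHom r (φ v) := by
  induction r using MonoidAlgebra.induction_on with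
  | of g =>
    rw [MonoidAlgebra.of_apply]
    rw [show MonoidAlgebra.single g (1 : F p) = (MonoidAlgebra.single g (1 : F p)) from rfl]
    rw [Representation.asAlgebraHom_single, Representation.asAlgebraHom_single, one_smul,
      one_smul]
    exact hφ g v
  | add f g hf hg =>
    rw [map_add, map_add, LinearMap.add_apply, LinearMap.add_apply, map_add, hf, hg]
  | smul r f hf =>
    rw [map_smul, map_smul, LinearMap.smul_apply, LinearMap.smul_apply, map_smul, hf]

/-- An equivariant linear map induces a `MonoidAlgebra`-linear map between the
associated modules. -/
noncomputable def asModuleHom (ρV : Representation (F p) (GL2 p) V)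
    (ρW : Representation (F p) (GL2 p) W) (φ : V →ₗ[F p] W)
    (hφ : ∀ (g : GL2 p) (v : V), φ (ρV g v) = ρW g (φ v)) :
    ρV.asModule →ₗ[MonoidAlgebra (F p) (GL2 p)] ρW.asModule where
  toFun := φ
  map_add' := map_add φ
  map_smul' r x := commute_asAlgebraHom p ρV ρW φ hφ r x

theorem asModuleHom_apply (ρV : Representation (F p) (GL2 p) V)
    (ρW : Representation (F p) (GL2 p) W) (φ : V →ₗ[F p] W) (hφ) (x : ρV.asModule) :
    asModuleHom p ρV ρW φ hφ x = φ x := rfl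

theorem isConstituent_of_maps {U : Type} [AddCommGroup U] [Module (F p) U]
    (ρU : Representation (F p) (GL2 p) U) (ρV : Representation (F p) (GL2 p) V)
    (ρW : Representation (F p) (GL2 p) W)
    (α : U →ₗ[F p] W) (β : U →ₗ[F p] V)
    (hα : ∀ (g : GL2 p) (u : U), α (ρU g u) = ρW g (α u))
    (hβ : ∀ (g : GL2 p) (u : U), β (ρU g u) = ρV g (β u))
    (hαi : Function.Injective α) (hβs : Function.Surjective β) :
    IsConstituent p ρV ρW := by
  classical
  set α' := asModuleHom p ρU ρW α hα with hα'
  set β' := asModuleHom p ρU ρV β hβ with hβ'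
  have hαi' : Function.Injective α' := hαi
  have hβs' : Function.Surjective β' := hβs
  refine ⟨Submodule.map α' (LinearMap.ker β'), LinearMap.range α', ?_, ?_⟩
  · rintro x hx
    obtain ⟨u, -, rfl⟩ := hx
    exact ⟨u, rfl⟩
  · set e1 := LinearEquiv.ofInjective α' hαi' with he1
    have hmap : Submodule.map (e1 : _ →ₗ[MonoidAlgebra (F p) (GL2 p)] _) (LinearMap.ker β')
        = Submodule.comap (LinearMap.range α').subtype
            (Submodule.map α' (LinearMap.ker β')) := by
      ext x
      constructor
      · rintro ⟨u, hu, rfl⟩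
        refine ⟨u, hu, ?_⟩
        rw [he1]
        rfl
      · rintro ⟨u, hu, hux⟩
        refine ⟨u, hu, ?_⟩
        apply Subtype.ext
        rw [he1]
        exact hux
    exact ⟨(Submodule.Quotient.equiv (LinearMap.ker β') _ e1 hmap).symm.trans
      (β'.quotKerEquivOfSurjective hβs')⟩

end Glue

section Assemble

theorem detUnit_coe_pow (g : GL2 p) (n : ℕ) :
    ((detUnit p g ^ (n : ℤ) : (F p)ˣ) : F p) = (algebraMap (ZMod p) (F p) g.val.det) ^ n := by
  rw [zpow_natCast, Units.val_pow_eq_pow_val]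
  rfl

theorem VRepZ_coe (z : ℤ) (n : ℕ) (g : GL2 p) (x : SymSpace p n) :
    ((VRepZ p z n g x : SymSpace p n) : MvPolynomial (Fin 2) (F p))
      = ((detUnit p g ^ z : (F p)ˣ) : F p) • matAct p g ↑x := rfl

theorem symRep_coe (n : ℕ) (g : GL2 p) (x : SymSpace p n) :
    ((symRep p n g x : SymSpace p n) : MvPolynomial (Fin 2) (F p)) = matAct p g ↑x := rfl

/-- Multiplication by `θ^n`, as a map of homogeneous components. -/
noncomputable def thetaMul (n m : ℕ) : SymSpace p m →ₗ[F p] SymSpace p ((p + 1) * n + m) :=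
  (LinearMap.mulLeft (F p) (theta p ^ n)).restrict fun x hx => by
    have h := (isHomogeneous_pow p (theta_isHomogeneous p) n).mul
      ((mem_homogeneousSubmodule _ _).mp hx)
    exact (mem_homogeneousSubmodule _ _).mpr h

theorem thetaMul_coe (n m : ℕ) (x : SymSpace p m) :
    ((thetaMul p n m x : SymSpace p ((p + 1) * n + m)) : MvPolynomial (Fin 2) (F p))
      = theta p ^ n * ↑x := rfl

theorem thetaMul_injective (n m : ℕ) : Function.Injective (thetaMul p n m) := by
  intro x y h
  apply Subtype.ext
  have h2 := congrArg (fun z : SymSpace p ((p + 1) * n + m) =>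
    (z : MvPolynomial (Fin 2) (F p))) h
  simp only [thetaMul_coe] at h2
  exact mul_left_cancel₀ (pow_ne_zero n (theta_ne_zero p)) h2

theorem thetaMul_equivariant (n m : ℕ) (g : GL2 p) (u : SymSpace p m) :
    thetaMul p n m (VRepZ p (n : ℤ) m g u)
      = symRep p ((p + 1) * n + m) g (thetaMul p n m u) := by
  apply Subtype.ext
  rw [symRep_coe, thetaMul_coe, thetaMul_coe, VRepZ_coe, detUnit_coe_pow,
    matAct_eq_mAct, mAct_theta_pow_mul, mul_smul_comm]

/-- The reduction map on homogeneous components. -/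
noncomputable def Tres (t : ℕ) : SymSpace p (p + t - 1) →ₗ[F p] SymSpace p (p - t - 1) :=
  (Tmap p t).restrict fun _ hx => Tmap_mem p t hx

theorem Tres_coe (t : ℕ) (x : SymSpace p (p + t - 1)) :
    ((Tres p t x : SymSpace p (p - t - 1)) : MvPolynomial (Fin 2) (F p)) = Tmap p t ↑x := rfl

theorem Tres_surjective (t : ℕ) (ht : t ≤ p - 1) : Function.Surjective (Tres p t) := by
  intro y
  refine ⟨⟨Smap p t ↑y, Smap_mem p t ht y.2⟩, Subtype.ext ?_⟩
  rw [Tres_coe]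
  exact Tmap_Smap p t ht y.2

theorem Tres_equivariant (n t : ℕ) (ht : t ≤ p - 1) (g : GL2 p)
    (u : SymSpace p (p + t - 1)) :
    Tres p t (VRepZ p (n : ℤ) (p + t - 1) g u)
      = VRepZ p ((n + t : ℕ) : ℤ) (p - t - 1) g (Tres p t u) := by
  apply Subtype.ext
  rw [Tres_coe, VRepZ_coe, VRepZ_coe, detUnit_coe_pow, detUnit_coe_pow, Tres_coe,
    map_smul, matAct_eq_mAct]
  rw [Tmap_equiv p t ht g.val ↑u u.2]
  rw [smul_smul, ← pow_add]

end Assemble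

/-- `V_{a,b} = det^a ⊗ Sym^{b-1}` is a Jordan–Hölder constituent of
`Sym^{k'(a,b)-2}`, where `k'(a,b) = a(p+1)+b+1` if `a+b < p` and
`k'(a,b) = (a+1)(p+1)+bp-p²` if `a+b ≥ p`. -/
theorem V_constituent_of_kf (p : ℕ) [Fact p.Prime] (hp : Odd p) (a b : ℕ)
    (ha : a ≤ p - 2) (hb1 : 1 ≤ b) (hb : b ≤ p) :
    IsConstituent p (VRep p a (b - 1)) (symRep p (kf p a b - 2)) := by
  have hpp : p.Prime := Fact.out
  have hp2 : 2 ≤ p := hpp.two_le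
  rcases lt_or_ge (a + b) p with hcase | hcase
  · have hkf : kf p a b - 2 = (p + 1) * a + (b - 1) := by
      rw [kf, if_pos hcase, mul_comm a (p + 1)]
      obtain ⟨P, hP⟩ : ∃ P, (p + 1) * a = P := ⟨_, rfl⟩
      rw [hP]
      omega
    rw [hkf]
    exact isConstituent_of_maps p (VRep p a (b - 1)) (VRep p a (b - 1))
      (symRep p ((p + 1) * a + (b - 1)))
      (thetaMul p a (b - 1)) LinearMap.id
      (thetaMul_equivariant p a (b - 1)) (fun g u => rfl)
      (thetaMul_injective p a (b - 1)) Function.surjective_id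
  · obtain ⟨n, hn⟩ : ∃ n, a + b = p + n := ⟨a + b - p, by omega⟩
    obtain ⟨t, htb⟩ : ∃ t, b + t = p := ⟨p - b, by omega⟩
    have hb2 : 2 ≤ b := by omega
    have ht : t ≤ p - 1 := by omega
    have hnt : n + t = a := by omega
    have hb1' : b - 1 = p - t - 1 := by omega
    have hkf : kf p a b - 2 = (p + 1) * n + (p + t - 1) := by
      have hgoal : (a + 1) * (p + 1) + b * p = ((p + 1) * n + (p + t - 1) + 2) + p ^ 2 := by
        have hnz : (a : ℤ) + b = p + n := by exact_mod_cast hn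
        have htz : (b : ℤ) + t = p := by exact_mod_cast htb
        have hpt : (((p + t - 1 : ℕ)) : ℤ) = (p : ℤ) + t - 1 := by
          rw [Nat.cast_sub (by omega)]
          push_cast
          ring
        zify
        rw [hpt]
        linear_combination ((p : ℤ) + 1) * hnz - htz
      rw [kf, if_neg (by omega)]
      obtain ⟨A, hA⟩ : ∃ A, (a + 1) * (p + 1) + b * p = A := ⟨_, rfl⟩
      obtain ⟨B, hB⟩ : ∃ B, p ^ 2 = B := ⟨_, rfl⟩
      obtain ⟨C, hC⟩ : ∃ C, (p + 1) * n = C := ⟨_, rfl⟩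
      rw [hA, hB, hC] at hgoal ⊢
      omega
    rw [hb1', hkf, ← hnt]
    exact isConstituent_of_maps p (VRepZ p (n : ℤ) (p + t - 1)) (VRep p (n + t) (p - t - 1))
      (symRep p ((p + 1) * n + (p + t - 1)))
      (thetaMul p n (p + t - 1)) (Tres p t)
      (thetaMul_equivariant p n (p + t - 1))
      (Tres_equivariant p n t ht)
      (thetaMul_injective p n (p + t - 1)) (Tres_surjective p t ht)
end
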